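/- If u is a factor of the Thue–Morse word t of length |u| > 3 · 2^{k-1} (k ≥ 1), then the cutting set of order k of u is unique: there is exactly one way, up to the position modulo 2^k determined by any occurrence, to align u with the decomposition of t into blocks φ^k(t_0) φ^k(t_1) φ^k(t_2)···. Formally, the set { ([i, i+|u|] ∩ 2^k ℕ) − i : i ∈ ℕ, u = t_{[i, i+|u|)} } is a singleton. -/

import Mathlib

/-- Number of occurrences of the second word as a (scattered) subword of the first. -/
def binom {α : Type*} [DecidableEq α] : List α → List α → ℕ
  | _, [] => 1
  | [], _ :: _ => 0
  | a :: u, b :: v => binom u (b :: v) + if a = b then binom u v else 0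

/-- k-binomial equivalence. -/
def BinEq (k : ℕ) (u v : List Bool) : Prop :=
  ∀ x : List Bool, x.length ≤ k → binom u x = binom v x

/-- The Thue–Morse word: `tm n` is the parity of the number of ones
in the binary expansion of `n` (`false` plays the role of the letter 0). -/
def tm (n : ℕ) : Bool := (Nat.digits 2 n).count 1 % 2 == 1

/-- `u` occurs as a (contiguous) factor of the Thue–Morse word. -/
def isFactorTM (u : List Bool) : Prop :=
  ∃ i : ℕ, u = (List.range u.length).map (fun j => tm (i + j))

/-- The Thue–Morse morphism φ(0)=01, φ(1)=10, extended to words. -/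
def phiW (w : List Bool) : List Bool :=
  w.flatMap (fun a => if a then [true, false] else [false, true])

/-- The set of cutting sets of order `k` of a factor `u` of the Thue–Morse word:
for every occurrence `t_[i, i+|u|)` of `u`, the relative positions in `[i, i+|u|]`
of the nonnegative multiples of `2^k`. -/
def CutTM (k : ℕ) (u : List Bool) : Set (Set ℕ) :=
  { S | ∃ i : ℕ, u = (List.range u.length).map (fun j => tm (i + j)) ∧
      S = Set.image (fun m => m - i) {m | i ≤ m ∧ m ≤ i + u.length ∧ 2 ^ k ∣ m} }


lemma tm_even (n : ℕ) : tm (2 * n) = tm n := by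
  rcases Nat.eq_zero_or_pos n with h | h
  · simp [h]
  · unfold tm
    rw [Nat.digits_def' (by norm_num : 1 < 2) (by omega)]
    simp [Nat.mul_mod_right, Nat.mul_div_cancel_left _ (by norm_num : 0 < 2)]

lemma tm_odd (n : ℕ) : tm (2 * n + 1) = !tm n := by
  unfold tm
  rw [Nat.digits_def' (by norm_num : 1 < 2) (by omega)]
  have h1 : (2 * n + 1) % 2 = 1 := by omega
  have h2 : (2 * n + 1) / 2 = n := by omega
  rw [h1, h2]
  rcases Nat.mod_two_eq_zero_or_one ((Nat.digits 2 n).count 1) with h | h <;>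
    simp [List.count_cons, Nat.add_mod, h]

lemma no_three (m : ℕ) : tm m ≠ tm (m+1) ∨ tm (m+1) ≠ tm (m+2) := by
  rcases Nat.even_or_odd m with ⟨j, hj⟩ | ⟨j, hj⟩
  · left
    subst hj
    rw [show j + j = 2 * j by ring, show 2*j+1 = 2*j+1 from rfl, tm_even, tm_odd]
    cases tm j <;> simp
  · right
    subst hj
    rw [show 2*j+1+1 = 2*(j+1) by ring, show 2*j+1+2 = 2*(j+1)+1 by ring, tm_even, tm_odd]
    cases tm (j+1) <;> simp

lemma base_aux (n m L : ℕ) (h4 : 4 ≤ L)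
    (h : ∀ j, j < L → tm (2*n + j) = tm (2*m+1 + j)) : False := by
  have e0 := h 0 (by omega)
  have e1 := h 1 (by omega)
  have e2 := h 2 (by omega)
  have e3 := h 3 (by omega)
  rw [show 2*n+0 = 2*n by ring, show 2*m+1+0 = 2*m+1 by ring, tm_even, tm_odd] at e0
  rw [show 2*n+1 = 2*n+1 from rfl, show 2*m+1+1 = 2*(m+1) by ring, tm_odd, tm_even] at e1
  rw [show 2*n+2 = 2*(n+1) by ring, show 2*m+1+2 = 2*(m+1)+1 by ring, tm_even, tm_odd] at e2
  rw [show 2*n+3 = 2*(n+1)+1 by ring, show 2*m+1+3 = 2*(m+2) by ring, tm_odd, tm_even] at e3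
  rcases no_three m with hc | hc <;>
  · cases hn : tm n <;> cases hm : tm m <;> cases hn1 : tm (n+1) <;>
      cases hm1 : tm (m+1) <;> cases hm2 : tm (m+2) <;> simp_all

lemma base (i i' L : ℕ) (h4 : 4 ≤ L)
    (h : ∀ j, j < L → tm (i + j) = tm (i' + j)) : i % 2 = i' % 2 := by
  rcases Nat.even_or_odd i with ⟨n, hn⟩ | ⟨n, hn⟩ <;>
    rcases Nat.even_or_odd i' with ⟨m, hm⟩ | ⟨m, hm⟩
  · omega
  · exfalso
    exact base_aux n m L h4 (fun j hj => by
      have := h j hj; rw [hn, hm] at this; rw [show 2*n = n+n by ring]; exact this)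
  · exfalso
    exact base_aux m n L h4 (fun j hj => by
      have := (h j hj).symm; rw [hn, hm] at this; rw [show 2*m = m+m by ring]; exact this)
  · omega

lemma tm_sync : ∀ k, 1 ≤ k → ∀ L, 3 * 2^(k-1) < L → ∀ i i',
    (∀ j, j < L → tm (i + j) = tm (i' + j)) → i % 2^k = i' % 2^k := by
  intro k hk
  induction k, hk using Nat.le_induction with
  | base =>
    intro L hL i i' h
    simpa using base i i' L (by simp at hL; omega) h
  | succ k hk ih =>
    intro L hL i i' h
    have hc : 1 ≤ 2^(k-1) := Nat.one_le_two_pow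
    have hp : 2^(k+1-1) = 2 * 2^(k-1) := by
      rw [show k+1-1 = (k-1)+1 by omega, pow_succ]; ring
    rw [hp] at hL
    have h2k : 2^k = 2 * 2^(k-1) := by
      conv_lhs => rw [show k = (k-1)+1 by omega]
      rw [pow_succ]; ring
    have hpar : i % 2 = i' % 2 := base i i' L (by omega) h
    have hsplit : 2^(k+1) = 2 * 2^k := by rw [pow_succ]; ring
    rcases Nat.even_or_odd i with ⟨n, hn⟩ | ⟨n, hn⟩ <;>
      rcases Nat.even_or_odd i' with ⟨m, hm⟩ | ⟨m, hm⟩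
    · -- both even
      have key : ∀ j, j < (L+1)/2 → tm (n + j) = tm (m + j) := by
        intro j hj
        have h1 := h (2*j) (by omega)
        rw [hn, hm, show n+n+2*j = 2*(n+j) by ring, show m+m+2*j = 2*(m+j) by ring,
          tm_even, tm_even] at h1
        exact h1
      have := ih ((L+1)/2) (by omega) n m key
      rw [hn, hm, hsplit, show n+n = 2*n by ring, show m+m = 2*m by ring,
        Nat.mul_mod_mul_left, Nat.mul_mod_mul_left, this]
    · omega
    · omega
    · -- both odd
      have key : ∀ j, j < L/2 + 1 → tm (n + j) = tm (m + j) := by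
        intro j hj
        match j with
        | 0 =>
          have h1 := h 0 (by omega)
          rw [hn, hm, show 2*n+1+0 = 2*n+1 by ring, show 2*m+1+0 = 2*m+1 by ring,
            tm_odd, tm_odd] at h1
          simpa using Bool.not_inj h1
        | (j'+1) =>
          have h1 := h (2*j'+1) (by omega)
          rw [hn, hm, show 2*n+1+(2*j'+1) = 2*(n+(j'+1)) by ring,
            show 2*m+1+(2*j'+1) = 2*(m+(j'+1)) by ring, tm_even, tm_even] at h1
          exact h1
      have hmod := ih (L/2 + 1) (by omega) n m key
      have d1 := Nat.div_add_mod n (2^k)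
      have d2 := Nat.div_add_mod m (2^k)
      rw [hn, hm, hsplit]
      rw [show 2*n+1 = (2*(n % 2^k)+1) + (2*2^k) * (n / 2^k) by
          conv_lhs => rw [← d1]
          ring,
        show 2*m+1 = (2*(m % 2^k)+1) + (2*2^k) * (m / 2^k) by
          conv_lhs => rw [← d2]
          ring,
        Nat.add_mul_mod_self_left, Nat.add_mul_mod_self_left, hmod]

lemma no_three' (m : ℕ) : tm m ≠ tm (m+1) ∨ tm (m+1) ≠ tm (m+2) := no_three m

lemma cut_subset (p L i i' : ℕ) (hmod : i % p = i' % p) :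
    (fun m => m - i) '' {m | i ≤ m ∧ m ≤ i + L ∧ p ∣ m} ⊆
    (fun m => m - i') '' {m | i' ≤ m ∧ m ≤ i' + L ∧ p ∣ m} := by
  rintro s ⟨m, ⟨h1, h2, h3⟩, rfl⟩
  refine ⟨i' + (m - i), ⟨by omega, by omega, ?_⟩, by
    show i' + (m - i) - i' = m - i
    omega⟩
  have h4 : Nat.ModEq p i' i := hmod.symm
  have h5 : (i' + (m - i)) ≡ (i + (m - i)) [MOD p] := Nat.ModEq.add_right _ h4
  rw [show i + (m - i) = m by omega] at h5
  exact (Nat.modEq_zero_iff_dvd).mp (h5.trans ((Nat.modEq_zero_iff_dvd).mpr h3))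

lemma cut_eq (p L i i' : ℕ) (hmod : i % p = i' % p) :
    (fun m => m - i) '' {m | i ≤ m ∧ m ≤ i + L ∧ p ∣ m} =
    (fun m => m - i') '' {m | i' ≤ m ∧ m ≤ i' + L ∧ p ∣ m} :=
  Set.Subset.antisymm (cut_subset p L i i' hmod) (cut_subset p L i' i hmod.symm)

theorem cut_singleton (k : ℕ) (hk : 1 ≤ k) (u : List Bool) (hu : isFactorTM u)
    (hlen : 3 * 2 ^ (k - 1) < u.length) :
    ∃ C : Set ℕ, CutTM k u = {C} := by
  obtain ⟨i₀, hi₀⟩ := hu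
  refine ⟨(fun m => m - i₀) '' {m | i₀ ≤ m ∧ m ≤ i₀ + u.length ∧ 2 ^ k ∣ m}, ?_⟩
  ext S
  simp only [Set.mem_singleton_iff]
  constructor
  · rintro ⟨i, hi, rfl⟩
    have hsame : ∀ j, j < u.length → tm (i + j) = tm (i₀ + j) := by
      intro j hj
      have e : (List.range u.length).map (fun j => tm (i + j))
          = (List.range u.length).map (fun j => tm (i₀ + j)) := hi.symm.trans hi₀
      have e3 := congrArg (fun l => l[j]?) e
      simpa [List.getElem?_map, List.getElem?_range, hj] using e3
    have hmod := tm_sync k hk u.length hlen i i₀ hsame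
    exact cut_eq (2^k) u.length i i₀ hmod
  · rintro rfl
    exact ⟨i₀, hi₀, rfl⟩
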